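/- arXiv:1812.05993 — 4 statements merged into one kernel-verified Lean document; each statement's English description precedes it below -/
import Mathlib

section
/- Let E be the elliptic curve over the finite field 𝔽₇ given by the Weierstrass equation y² + y = x³ − x² − 2x + 1 (i.e., with coefficients a₁ = 0, a₂ = −1, a₃ = 1, a₄ = −2, a₆ = 1; this equation has nonzero discriminant over 𝔽₇). Then the group E(𝔽₇) of 𝔽₇-rational points of E (including the point at infinity) is isomorphic, as an abelian group, to (ℤ/3ℤ) × (ℤ/3ℤ). -/
namespace OggAux

open WeierstrassCurve WeierstrassCurve.Affine WeierstrassCurve.Affine.Point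

instance : Fact (Nat.Prime 7) := ⟨by norm_num⟩

abbrev Wc : WeierstrassCurve.Affine (ZMod 7) := { a₁ := 0, a₂ := -1, a₃ := 1, a₄ := -2, a₆ := 1 }

lemma some_eq_some {x₁ y₁ x₂ y₂ : ZMod 7} (h₁ : Wc.Nonsingular x₁ y₁) (h₂ : Wc.Nonsingular x₂ y₂)
    (hx : x₁ = x₂) (hy : y₁ = y₂) : Point.some _ _ h₁ = Point.some _ _ h₂ := by
  subst hx; subst hy; rfl

lemma ns (x y : ZMod 7)
    (h : (y ^ 2 + 0 * x * y + 1 * y = x ^ 3 + (-1) * x ^ 2 + (-2) * x + 1) ∧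
      ((0 : ZMod 7) * y ≠ 3 * x ^ 2 + 2 * (-1) * x + (-2) ∨ y ≠ -y - 0 * x - 1)) :
    Wc.Nonsingular x y := by
  rw [WeierstrassCurve.Affine.nonsingular_iff, WeierstrassCurve.Affine.equation_iff]
  exact h

lemma ns12 : Wc.Nonsingular 1 2 := ns 1 2 (by decide)
lemma ns14 : Wc.Nonsingular 1 4 := ns 1 4 (by decide)
lemma ns32 : Wc.Nonsingular 3 2 := ns 3 2 (by decide)
lemma ns34 : Wc.Nonsingular 3 4 := ns 3 4 (by decide)
lemma ns42 : Wc.Nonsingular 4 2 := ns 4 2 (by decide)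
lemma ns44 : Wc.Nonsingular 4 4 := ns 4 4 (by decide)
lemma ns50 : Wc.Nonsingular 5 0 := ns 5 0 (by decide)
lemma ns56 : Wc.Nonsingular 5 6 := ns 5 6 (by decide)

noncomputable def P : Wc.Point := Point.some _ _ ns12
noncomputable def Q : Wc.Point := Point.some _ _ ns32

lemma slPP : Wc.slope 1 1 2 2 = 4 := by
  rw [slope_of_Y_ne rfl (by decide), div_eq_iff (show (2 : ZMod 7) - Wc.negY 1 2 ≠ 0 by decide)]
  decide

lemma h2P : P + P = Point.some _ _ ns14 := by
  rw [P, Point.add_of_Y_ne (h₁ := ns12) (h₂ := ns12) (by decide)]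
  apply some_eq_some <;> rw [slPP] <;> decide

lemma slQQ : Wc.slope 3 3 2 2 = 1 := by
  rw [slope_of_Y_ne rfl (by decide), div_eq_iff (show (2 : ZMod 7) - Wc.negY 3 2 ≠ 0 by decide)]
  decide

lemma h2Q : Q + Q = Point.some _ _ ns34 := by
  rw [Q, Point.add_of_Y_ne (h₁ := ns32) (h₂ := ns32) (by decide)]
  apply some_eq_some <;> rw [slQQ] <;> decide

lemma h3P : Point.some _ _ ns14 + P = 0 := by
  rw [P]; exact Point.add_of_Y_eq rfl (by decide)

lemma h3Q : Point.some _ _ ns34 + Q = 0 := by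
  rw [Q]; exact Point.add_of_Y_eq rfl (by decide)

lemma slPQ : Wc.slope 1 3 2 2 = 0 := by
  rw [slope_of_X_ne (by decide), div_eq_iff (show (1 : ZMod 7) - 3 ≠ 0 by decide)]
  decide

lemma hPQ : P + Q = Point.some _ _ ns44 := by
  rw [P, Q, Point.add_of_X_ne (h₁ := ns12) (h₂ := ns32) (by decide)]
  apply some_eq_some <;> rw [slPQ] <;> decide

lemma slP2Q : Wc.slope 1 3 2 4 = 1 := by
  rw [slope_of_X_ne (by decide), div_eq_iff (show (1 : ZMod 7) - 3 ≠ 0 by decide)]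
  decide

lemma hP2Q : P + Point.some _ _ ns34 = Point.some _ _ ns50 := by
  rw [P, Point.add_of_X_ne (h₁ := ns12) (h₂ := ns34) (by decide)]
  apply some_eq_some <;> rw [slP2Q] <;> decide

lemma sl2PQ : Wc.slope 1 3 4 2 = 6 := by
  rw [slope_of_X_ne (by decide), div_eq_iff (show (1 : ZMod 7) - 3 ≠ 0 by decide)]
  decide

lemma h2PQ : Point.some _ _ ns14 + Q = Point.some _ _ ns56 := by
  rw [Q, Point.add_of_X_ne (h₁ := ns14) (h₂ := ns32) (by decide)]
  apply some_eq_some <;> rw [sl2PQ] <;> decide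

lemma sl2P2Q : Wc.slope 1 3 4 4 = 0 := by
  rw [slope_of_X_ne (by decide), div_eq_iff (show (1 : ZMod 7) - 3 ≠ 0 by decide)]
  decide

lemma h2P2Q : Point.some _ _ ns14 + Point.some _ _ ns34 = Point.some _ _ ns42 := by
  rw [Point.add_of_X_ne (h₁ := ns14) (h₂ := ns34) (by decide)]
  apply some_eq_some <;> rw [sl2P2Q] <;> decide

lemma h3P' : (3 : ℤ) • P = 0 := by
  rw [show (3 : ℤ) = ((3 : ℕ) : ℤ) from rfl, natCast_zsmul,
    show (3 : ℕ) = 2 + 1 from rfl, succ_nsmul, two_nsmul, h2P, h3P]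

lemma h3Q' : (3 : ℤ) • Q = 0 := by
  rw [show (3 : ℤ) = ((3 : ℕ) : ℤ) from rfl, natCast_zsmul,
    show (3 : ℕ) = 2 + 1 from rfl, succ_nsmul, two_nsmul, h2Q, h3Q]

noncomputable def φP : ZMod 3 →+ Wc.Point :=
  ZMod.lift 3 ⟨zmultiplesHom _ P, h3P'⟩

noncomputable def φQ : ZMod 3 →+ Wc.Point :=
  ZMod.lift 3 ⟨zmultiplesHom _ Q, h3Q'⟩

lemma φP1 : φP 1 = P := by
  rw [φP, show (1 : ZMod 3) = ((1 : ℤ) : ZMod 3) by decide, ZMod.lift_coe]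
  exact one_zsmul P

lemma φP2 : φP 2 = Point.some _ _ ns14 := by
  rw [φP, show (2 : ZMod 3) = ((2 : ℤ) : ZMod 3) by decide, ZMod.lift_coe]
  show (2 : ℤ) • P = _
  rw [two_zsmul, h2P]

lemma φQ1 : φQ 1 = Q := by
  rw [φQ, show (1 : ZMod 3) = ((1 : ℤ) : ZMod 3) by decide, ZMod.lift_coe]
  exact one_zsmul Q

lemma φQ2 : φQ 2 = Point.some _ _ ns34 := by
  rw [φQ, show (2 : ZMod 3) = ((2 : ℤ) : ZMod 3) by decide, ZMod.lift_coe]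
  show (2 : ℤ) • Q = _
  rw [two_zsmul, h2Q]

noncomputable def φ : ZMod 3 × ZMod 3 →+ Wc.Point := φP.coprod φQ

lemma v00 : φ (0, 0) = 0 := by simp [φ]
lemma v01 : φ (0, 1) = Q := by rw [φ, AddMonoidHom.coprod_apply, _root_.map_zero, φQ1, zero_add]
lemma v02 : φ (0, 2) = Point.some _ _ ns34 := by
  rw [φ, AddMonoidHom.coprod_apply, _root_.map_zero, φQ2, zero_add]
lemma v10 : φ (1, 0) = P := by rw [φ, AddMonoidHom.coprod_apply, _root_.map_zero, φP1, add_zero]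
lemma v20 : φ (2, 0) = Point.some _ _ ns14 := by
  rw [φ, AddMonoidHom.coprod_apply, _root_.map_zero, φP2, add_zero]
lemma v11 : φ (1, 1) = Point.some _ _ ns44 := by
  rw [φ, AddMonoidHom.coprod_apply, φP1, φQ1, hPQ]
lemma v12 : φ (1, 2) = Point.some _ _ ns50 := by
  rw [φ, AddMonoidHom.coprod_apply, φP1, φQ2, hP2Q]
lemma v21 : φ (2, 1) = Point.some _ _ ns56 := by
  rw [φ, AddMonoidHom.coprod_apply, φP2, φQ1, h2PQ]
lemma v22 : φ (2, 2) = Point.some _ _ ns42 := by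
  rw [φ, AddMonoidHom.coprod_apply, φP2, φQ2, h2P2Q]

lemma zmod3_cases : ∀ a : ZMod 3, a = 0 ∨ a = 1 ∨ a = 2 := by decide

lemma claspts : ∀ x y : ZMod 7,
    (y ^ 2 + 0 * x * y + 1 * y = x ^ 3 + (-1) * x ^ 2 + (-2) * x + 1) →
    (x = 1 ∧ y = 2) ∨ (x = 1 ∧ y = 4) ∨ (x = 3 ∧ y = 2) ∨ (x = 3 ∧ y = 4) ∨
    (x = 4 ∧ y = 2) ∨ (x = 4 ∧ y = 4) ∨ (x = 5 ∧ y = 0) ∨ (x = 5 ∧ y = 6) := by decide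

lemma φ_bij : Function.Bijective φ := by
  constructor
  · rw [injective_iff_map_eq_zero]
    rintro ⟨a, b⟩ h
    rcases zmod3_cases a with rfl | rfl | rfl <;> rcases zmod3_cases b with rfl | rfl | rfl
    · rfl
    · rw [v01, Q] at h; exact absurd h (Point.some_ne_zero _)
    · rw [v02] at h; exact absurd h (Point.some_ne_zero _)
    · rw [v10, P] at h; exact absurd h (Point.some_ne_zero _)
    · rw [v11] at h; exact absurd h (Point.some_ne_zero _)
    · rw [v12] at h; exact absurd h (Point.some_ne_zero _)
    · rw [v20] at h; exact absurd h (Point.some_ne_zero _)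
    · rw [v21] at h; exact absurd h (Point.some_ne_zero _)
    · rw [v22] at h; exact absurd h (Point.some_ne_zero _)
  · rintro (_ | @⟨x, y, h⟩)
    · exact ⟨(0, 0), v00⟩
    · have e := (WeierstrassCurve.Affine.equation_iff (W := Wc) x y).mp h.1
      rcases claspts x y e with ⟨rfl, rfl⟩ | ⟨rfl, rfl⟩ | ⟨rfl, rfl⟩ | ⟨rfl, rfl⟩ |
        ⟨rfl, rfl⟩ | ⟨rfl, rfl⟩ | ⟨rfl, rfl⟩ | ⟨rfl, rfl⟩
      · exact ⟨(1, 0), v10⟩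
      · exact ⟨(2, 0), v20⟩
      · exact ⟨(0, 1), v01⟩
      · exact ⟨(0, 2), v02⟩
      · exact ⟨(2, 2), v22⟩
      · exact ⟨(1, 1), v11⟩
      · exact ⟨(1, 2), v12⟩
      · exact ⟨(2, 1), v21⟩

lemma Dne : (Wc.Δ : ZMod 7) ≠ 0 := by
  rw [WeierstrassCurve.Δ]
  simp only [WeierstrassCurve.b₂, WeierstrassCurve.b₄, WeierstrassCurve.b₆, WeierstrassCurve.b₈]
  decide

end OggAux

/-- The elliptic curve `y² + y = x³ - x² - 2x + 1` over `𝔽₇` (the reduction modulo `7` of the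
unique elliptic curve over `ℚ` of conductor `701`) has nonzero discriminant, and its group of
`𝔽₇`-rational points is isomorphic to `(ℤ/3ℤ) × (ℤ/3ℤ)`. -/
theorem ogg_stmt1 [Fact (Nat.Prime 7)] :
    letI W : WeierstrassCurve (ZMod 7) :=
      { a₁ := 0, a₂ := -1, a₃ := 1, a₄ := -2, a₆ := 1 }
    W.Δ ≠ 0 ∧ Nonempty (W.toAffine.Point ≃+ (ZMod 3) × (ZMod 3)) := by
  exact ⟨OggAux.Dne, ⟨(AddEquiv.ofBijective OggAux.φ OggAux.φ_bij).symm⟩⟩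
end

section
/- Let E be the elliptic curve over the finite field 𝔽₁₃ given by the Weierstrass equation y² + y = x³ + x² − 4x + 2 (i.e., with coefficients a₁ = 0, a₂ = 1, a₃ = 1, a₄ = −4, a₆ = 2; this equation has nonzero discriminant over 𝔽₁₃). Then E(𝔽₁₃) contains no point of order 3; equivalently, the 3-torsion subgroup of E(𝔽₁₃) is trivial. -/
open WeierstrassCurve.Affine

private lemma ogg_key : ∀ x y : ZMod 13, y ^ 2 + y = x ^ 3 + x ^ 2 - 4 * x + 2 →
    (3 * x ^ 2 + 2 * x - 4) ^ 2 ≠ (3 * x + 1) * (2 * y + 1) ^ 2 := by decide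

private lemma ogg_Δ :
    ({ a₁ := 0, a₂ := 1, a₃ := 1, a₄ := -4, a₆ := 2 } : WeierstrassCurve (ZMod 13)).Δ ≠ 0 := by
  decide

/-- The elliptic curve `y² + y = x³ + x² - 4x + 2` over `𝔽₁₃` (the reduction modulo `13` of the
elliptic curve `571B1` over `ℚ`) has nonzero discriminant, and its group of `𝔽₁₃`-rational
points contains no point of order `3`: the `3`-torsion subgroup of `E(𝔽₁₃)` is trivial. -/
theorem ogg_stmt2 [Fact (Nat.Prime 13)] :
    letI W : WeierstrassCurve (ZMod 13) :=
      { a₁ := 0, a₂ := 1, a₃ := 1, a₄ := -4, a₆ := 2 }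
    W.Δ ≠ 0 ∧ ∀ P : W.toAffine.Point, 3 • P = 0 → P = 0 := by
  refine ⟨ogg_Δ, ?_⟩
  intro P hP
  cases P with
  | zero => rfl
  | some x y h =>
    exfalso
    let W : WeierstrassCurve (ZMod 13) := { a₁ := 0, a₂ := 1, a₃ := 1, a₄ := -4, a₆ := 2 }
    have h3 : Point.some _ _ h + Point.some _ _ h + Point.some _ _ h = 0 := by
      rw [← hP, succ_nsmul, two_nsmul]
    by_cases hy : y = W.toAffine.negY x y
    · rw [Point.add_self_of_Y_eq hy, zero_add] at h3
      exact Point.some_ne_zero h h3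
    · rw [Point.add_self_of_Y_ne hy] at h3
      have h2 := eq_neg_of_add_eq_zero_left h3
      rw [Point.neg_some] at h2
      injection h2 with hx hy2
      simp only [addX] at hx
      have hden : y - W.toAffine.negY x y = 2 * y + 1 := by
        simp only [negY]; show y - (-y - 0 * x - 1) = 2 * y + 1; ring
      have h2y : (2 * y + 1 : ZMod 13) ≠ 0 := by
        rw [← hden]; exact sub_ne_zero.mpr hy
      have hslope := slope_of_Y_ne (W := W.toAffine) rfl hy
      rw [hden] at hslope
      have hnum : 3 * x ^ 2 + 2 * W.toAffine.a₂ * x + W.toAffine.a₄ - W.toAffine.a₁ * y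
          = 3 * x ^ 2 + 2 * x - 4 := by
        show 3 * x ^ 2 + 2 * 1 * x + (-4) - 0 * y = _; ring
      rw [hnum] at hslope
      have hLval : W.toAffine.slope x x y y * (2 * y + 1) = 3 * x ^ 2 + 2 * x - 4 := by
        rw [hslope, div_mul_cancel₀ _ h2y]
      have heq : y ^ 2 + y = x ^ 3 + x ^ 2 - 4 * x + 2 := by
        have h1 := (equation_iff (W := W.toAffine) x y).mp h.1
        show _ = _
        calc y ^ 2 + y = y ^ 2 + W.a₁ * x * y + W.a₃ * y - (W.a₁ * x * y) := by
              show _ = y ^ 2 + 0 * x * y + 1 * y - 0 * x * y; ring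
          _ = x ^ 3 + W.a₂ * x ^ 2 + W.a₄ * x + W.a₆ - (W.a₁ * x * y) := by rw [h1]
          _ = x ^ 3 + x ^ 2 - 4 * x + 2 := by
              show x ^ 3 + 1 * x ^ 2 + (-4) * x + 2 - 0 * x * y = _; ring
      have hsq : W.toAffine.slope x x y y ^ 2 = 3 * x + 1 := by
        have : W.toAffine.slope x x y y ^ 2 + W.toAffine.a₁ * W.toAffine.slope x x y y
            - W.toAffine.a₂ - x - x = x := hx
        rw [show W.toAffine.a₁ = 0 from rfl, show W.toAffine.a₂ = 1 from rfl] at this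
        linear_combination this
      apply ogg_key x y heq
      calc (3 * x ^ 2 + 2 * x - 4) ^ 2 = (W.toAffine.slope x x y y * (2 * y + 1)) ^ 2 := by
            rw [hLval]
        _ = (3 * x + 1) * (2 * y + 1) ^ 2 := by rw [mul_pow, hsq]
end

section
/- Let E be the elliptic curve over the finite field 𝔽₁₆₉ with 13² elements given by the Weierstrass equation y² + y = x³ + x² − 4x + 2 (coefficients a₁ = 0, a₂ = 1, a₃ = 1, a₄ = −4, a₆ = 2; this equation has nonzero discriminant). Then the 3-torsion subgroup {P ∈ E(𝔽₁₆₉) : 3·P = O} is isomorphic, as an abelian group, to (ℤ/3ℤ) × (ℤ/3ℤ); in particular all nine 3-torsion points of E are rational over 𝔽₁₆₉. -/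
open WeierstrassCurve WeierstrassCurve.Affine WeierstrassCurve.Affine.Point

instance : Fact (Nat.Prime 13) := ⟨by norm_num⟩

open Classical

noncomputable abbrev Fq : Type := GaloisField 13 2

noncomputable def Wc : WeierstrassCurve Fq := { a₁ := 0, a₂ := 1, a₃ := 1, a₄ := -4, a₆ := 2 }

lemma h13 : (13 : Fq) = 0 := by exact_mod_cast CharP.cast_eq_zero Fq 13

lemma hDelta : Wc.Δ = 1 := by
  simp only [WeierstrassCurve.Δ, WeierstrassCurve.b₂, WeierstrassCurve.b₄, WeierstrassCurve.b₆,
    WeierstrassCurve.b₈, Wc]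
  linear_combination (-44 : Fq) * h13

lemma hDne : Wc.Δ ≠ 0 := by rw [hDelta]; exact one_ne_zero

lemma exists_sqrt2 : ∃ t : Fq, t ^ 2 = 2 := by
  letI : Fintype Fq := Fintype.ofFinite Fq
  have hcard : Fintype.card Fq = 169 := by
    rw [← Nat.card_eq_fintype_card, GaloisField.card 13 2 (by norm_num)]; norm_num
  have hchar : ringChar Fq = 13 := ringChar.eq Fq 13
  have h2 : (2 : Fq) ≠ 0 := by
    intro h
    exact (by norm_num : ¬ (13 ∣ 2)) ((CharP.cast_eq_zero_iff Fq 13 2).mp (by exact_mod_cast h))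
  have hsq : IsSquare (2 : Fq) := by
    rw [FiniteField.isSquare_iff (by rw [hchar]; norm_num) h2, hcard]
    have h12 : (2 : Fq) ^ 12 = 1 := by linear_combination (315 : Fq) * h13
    have he : (169 / 2 : ℕ) = 12 * 7 := by norm_num
    rw [he, pow_mul, h12, one_pow]
  obtain ⟨r, hr⟩ := hsq
  exact ⟨r, by rw [pow_two, hr]⟩

lemma some_congr {x y x' y' : Fq} (h : Wc.toAffine.Nonsingular x y) (hx : x = x') (hy : y = y')
    (h' : Wc.toAffine.Nonsingular x' y') :
    WeierstrassCurve.Affine.Point.some _ _ h = WeierstrassCurve.Affine.Point.some _ _ h' := by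
  subst hx; subst hy; rfl

section pts
variable (t : Fq)

/-! Equations and nonsingularity of the eight affine 3-torsion points. -/

lemma eqP1 (ht : t ^ 2 = 2) : Wc.toAffine.Equation 4 (6 + 5*t) := by
  rw [WeierstrassCurve.Affine.equation_iff]; simp only [Wc]
  linear_combination (25 : Fq) * ht + (2 + 5*t : Fq) * h13

lemma eqP2 (ht : t ^ 2 = 2) : Wc.toAffine.Equation 6 (6 + 4*t) := by
  rw [WeierstrassCurve.Affine.equation_iff]; simp only [Wc]
  linear_combination (16 : Fq) * ht + (-12 + 4*t : Fq) * h13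

lemma eqS (ht : t ^ 2 = 2) : Wc.toAffine.Equation 9 (6 + 4*t) := by
  rw [WeierstrassCurve.Affine.equation_iff]; simp only [Wc]
  linear_combination (16 : Fq) * ht + (-54 + 4*t : Fq) * h13

lemma eqD (ht : t ^ 2 = 2) : Wc.toAffine.Equation 10 (6 + 9*t) := by
  rw [WeierstrassCurve.Affine.equation_iff]; simp only [Wc]
  linear_combination (81 : Fq) * ht + (-66 + 9*t : Fq) * h13

lemma eqnP1 (ht : t ^ 2 = 2) : Wc.toAffine.Equation 4 (6 + 8*t) := by
  rw [WeierstrassCurve.Affine.equation_iff]; simp only [Wc]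
  linear_combination (64 : Fq) * ht + (8 + 8*t : Fq) * h13

lemma eqnP2 (ht : t ^ 2 = 2) : Wc.toAffine.Equation 6 (6 + 9*t) := by
  rw [WeierstrassCurve.Affine.equation_iff]; simp only [Wc]
  linear_combination (81 : Fq) * ht + (-2 + 9*t : Fq) * h13

lemma eqnS (ht : t ^ 2 = 2) : Wc.toAffine.Equation 9 (6 + 9*t) := by
  rw [WeierstrassCurve.Affine.equation_iff]; simp only [Wc]
  linear_combination (81 : Fq) * ht + (-44 + 9*t : Fq) * h13

lemma eqnD (ht : t ^ 2 = 2) : Wc.toAffine.Equation 10 (6 + 4*t) := by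
  rw [WeierstrassCurve.Affine.equation_iff]; simp only [Wc]
  linear_combination (16 : Fq) * ht + (-76 + 4*t : Fq) * h13

lemma nsP1 (ht : t ^ 2 = 2) : Wc.toAffine.Nonsingular 4 (6 + 5*t) :=
  (Affine.equation_iff_nonsingular_of_Δ_ne_zero hDne).mp (eqP1 t ht)
lemma nsP2 (ht : t ^ 2 = 2) : Wc.toAffine.Nonsingular 6 (6 + 4*t) :=
  (Affine.equation_iff_nonsingular_of_Δ_ne_zero hDne).mp (eqP2 t ht)
lemma nsS (ht : t ^ 2 = 2) : Wc.toAffine.Nonsingular 9 (6 + 4*t) :=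
  (Affine.equation_iff_nonsingular_of_Δ_ne_zero hDne).mp (eqS t ht)
lemma nsD (ht : t ^ 2 = 2) : Wc.toAffine.Nonsingular 10 (6 + 9*t) :=
  (Affine.equation_iff_nonsingular_of_Δ_ne_zero hDne).mp (eqD t ht)
lemma nsnP1 (ht : t ^ 2 = 2) : Wc.toAffine.Nonsingular 4 (6 + 8*t) :=
  (Affine.equation_iff_nonsingular_of_Δ_ne_zero hDne).mp (eqnP1 t ht)
lemma nsnP2 (ht : t ^ 2 = 2) : Wc.toAffine.Nonsingular 6 (6 + 9*t) :=
  (Affine.equation_iff_nonsingular_of_Δ_ne_zero hDne).mp (eqnP2 t ht)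
lemma nsnS (ht : t ^ 2 = 2) : Wc.toAffine.Nonsingular 9 (6 + 9*t) :=
  (Affine.equation_iff_nonsingular_of_Δ_ne_zero hDne).mp (eqnS t ht)
lemma nsnD (ht : t ^ 2 = 2) : Wc.toAffine.Nonsingular 10 (6 + 4*t) :=
  (Affine.equation_iff_nonsingular_of_Δ_ne_zero hDne).mp (eqnD t ht)

/-! Basic inequalities. -/

lemma hy1 (ht : t ^ 2 = 2) : (6 + 5*t : Fq) ≠ Wc.toAffine.negY 4 (6 + 5*t) := by
  rw [WeierstrassCurve.Affine.negY]; simp only [Wc]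
  intro h
  exact one_ne_zero (α := Fq)
    (by linear_combination (2*t : Fq) * h + (-20 : Fq) * ht + (-3 - 2*t : Fq) * h13)

lemma hy2 (ht : t ^ 2 = 2) : (6 + 4*t : Fq) ≠ Wc.toAffine.negY 6 (6 + 4*t) := by
  rw [WeierstrassCurve.Affine.negY]; simp only [Wc]
  intro h
  exact one_ne_zero (α := Fq)
    (by linear_combination (9*t : Fq) * h + (-72 : Fq) * ht + (-11 - 9*t : Fq) * h13)

lemma hx12 : (4 : Fq) ≠ 6 := by
  intro h
  exact one_ne_zero (α := Fq) (by linear_combination (6 : Fq) * h + (1 : Fq) * h13)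

lemma h3ne : (3 : Fq) ≠ 0 := by
  intro h
  exact one_ne_zero (α := Fq) (by linear_combination (9 : Fq) * h + (-2 : Fq) * h13)

/-! Negations in literal form. -/

lemma negsome1 (ht : t ^ 2 = 2) : -(.some _ _ (nsP1 t ht)) = Point.some _ _ (nsnP1 t ht) := by
  rw [WeierstrassCurve.Affine.Point.neg_some]
  refine some_congr _ rfl ?_ _
  rw [WeierstrassCurve.Affine.negY]; simp only [Wc]
  linear_combination (-1 - t : Fq) * h13

lemma negsome2 (ht : t ^ 2 = 2) : -(.some _ _ (nsP2 t ht)) = Point.some _ _ (nsnP2 t ht) := by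
  rw [WeierstrassCurve.Affine.Point.neg_some]
  refine some_congr _ rfl ?_ _
  rw [WeierstrassCurve.Affine.negY]; simp only [Wc]
  linear_combination (-1 - t : Fq) * h13

lemma negsomeS (ht : t ^ 2 = 2) : -(.some _ _ (nsS t ht)) = Point.some _ _ (nsnS t ht) := by
  rw [WeierstrassCurve.Affine.Point.neg_some]
  refine some_congr _ rfl ?_ _
  rw [WeierstrassCurve.Affine.negY]; simp only [Wc]
  linear_combination (-1 - t : Fq) * h13

lemma negsomeD (ht : t ^ 2 = 2) : -(.some _ _ (nsD t ht)) = Point.some _ _ (nsnD t ht) := by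
  rw [WeierstrassCurve.Affine.Point.neg_some]
  refine some_congr _ rfl ?_ _
  rw [WeierstrassCurve.Affine.negY]; simp only [Wc]
  linear_combination (-1 - t : Fq) * h13

/-! Slopes. -/

lemma slope1 (ht : t ^ 2 = 2) : Wc.toAffine.slope 4 4 (6 + 5*t) (6 + 5*t) = 0 := by
  rw [WeierstrassCurve.Affine.slope_of_Y_ne rfl (hy1 t ht), div_eq_zero_iff]
  left; simp only [Wc]
  linear_combination (4 : Fq) * h13

lemma slope2 (ht : t ^ 2 = 2) : Wc.toAffine.slope 6 6 (6 + 4*t) (6 + 4*t) = 4*t := by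
  rw [WeierstrassCurve.Affine.slope_of_Y_ne rfl (hy2 t ht),
    div_eq_iff (sub_ne_zero.mpr (hy2 t ht))]
  rw [WeierstrassCurve.Affine.negY]; simp only [Wc]
  linear_combination (-32 : Fq) * ht + (4 - 4*t : Fq) * h13

lemma slopeS (ht : t ^ 2 = 2) : Wc.toAffine.slope 4 6 (6 + 5*t) (6 + 4*t) = 6*t := by
  rw [WeierstrassCurve.Affine.slope_of_X_ne hx12, div_eq_iff (sub_ne_zero.mpr hx12)]
  linear_combination (t : Fq) * h13

lemma slopeD (ht : t ^ 2 = 2) : Wc.toAffine.slope 4 6 (6 + 5*t) (6 + 9*t) = 2*t := by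
  rw [WeierstrassCurve.Affine.slope_of_X_ne hx12, div_eq_iff (sub_ne_zero.mpr hx12)]
  ring

/-! The four additions. -/

lemma dblP1 (ht : t ^ 2 = 2) :
    Point.some _ _ (nsP1 t ht) + Point.some _ _ (nsP1 t ht) = -Point.some _ _ (nsP1 t ht) := by
  rw [WeierstrassCurve.Affine.Point.add_self_of_Y_ne (hy1 t ht),
    WeierstrassCurve.Affine.Point.neg_some]
  refine some_congr _ ?_ ?_ _
  · rw [slope1 t ht]
    simp only [WeierstrassCurve.Affine.addX, Wc]
    linear_combination (-1 : Fq) * h13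
  · rw [slope1 t ht]
    simp only [WeierstrassCurve.Affine.addX, WeierstrassCurve.Affine.addY,
      WeierstrassCurve.Affine.negAddY, WeierstrassCurve.Affine.negY, Wc]
    ring

lemma dblP2 (ht : t ^ 2 = 2) :
    Point.some _ _ (nsP2 t ht) + Point.some _ _ (nsP2 t ht) = -Point.some _ _ (nsP2 t ht) := by
  rw [WeierstrassCurve.Affine.Point.add_self_of_Y_ne (hy2 t ht),
    WeierstrassCurve.Affine.Point.neg_some]
  refine some_congr _ ?_ ?_ _
  · rw [slope2 t ht]
    simp only [WeierstrassCurve.Affine.addX, Wc]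
    linear_combination (16 : Fq) * ht + (1 : Fq) * h13
  · rw [slope2 t ht]
    simp only [WeierstrassCurve.Affine.addX, WeierstrassCurve.Affine.addY,
      WeierstrassCurve.Affine.negAddY, WeierstrassCurve.Affine.negY, Wc]
    linear_combination (-64*t : Fq) * ht + (-4*t : Fq) * h13

lemma addS (ht : t ^ 2 = 2) :
    Point.some _ _ (nsP1 t ht) + Point.some _ _ (nsP2 t ht) = Point.some _ _ (nsS t ht) := by
  rw [WeierstrassCurve.Affine.Point.add_of_X_ne hx12]
  refine some_congr _ ?_ ?_ _
  · rw [slopeS t ht]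
    simp only [WeierstrassCurve.Affine.addX, Wc]
    linear_combination (36 : Fq) * ht + (4 : Fq) * h13
  · rw [slopeS t ht]
    simp only [WeierstrassCurve.Affine.addX, WeierstrassCurve.Affine.addY,
      WeierstrassCurve.Affine.negAddY, WeierstrassCurve.Affine.negY, Wc]
    linear_combination (-216*t : Fq) * ht + (-1 - 27*t : Fq) * h13

lemma addD (ht : t ^ 2 = 2) :
    Point.some _ _ (nsP1 t ht) + Point.some _ _ (nsnP2 t ht) = Point.some _ _ (nsD t ht) := by
  rw [WeierstrassCurve.Affine.Point.add_of_X_ne hx12]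
  refine some_congr _ ?_ ?_ _
  · rw [slopeD t ht]
    simp only [WeierstrassCurve.Affine.addX, Wc]
    linear_combination (4 : Fq) * ht + (-1 : Fq) * h13
  · rw [slopeD t ht]
    simp only [WeierstrassCurve.Affine.addX, WeierstrassCurve.Affine.addY,
      WeierstrassCurve.Affine.negAddY, WeierstrassCurve.Affine.negY, Wc]
    linear_combination (-8*t : Fq) * ht + (-1 : Fq) * h13

/-! Torsion. -/

lemma smul3 (P : Wc.toAffine.Point) : (3 : ℤ) • P = P + P + P := by
  rw [show (3 : ℤ) = 1 + 1 + 1 by norm_num, add_smul, add_smul, one_smul]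

lemma tor1 (ht : t ^ 2 = 2) : (3 : ℤ) • Point.some _ _ (nsP1 t ht) = 0 := by
  rw [smul3, dblP1 t ht, neg_add_cancel]

lemma tor2 (ht : t ^ 2 = 2) : (3 : ℤ) • Point.some _ _ (nsP2 t ht) = 0 := by
  rw [smul3, dblP2 t ht, neg_add_cancel]

/-! Enumeration of all 3-torsion affine points. -/

lemma enum (ht : t ^ 2 = 2) (x y : Fq) (h : Wc.toAffine.Nonsingular x y)
    (hP : (3 : ℤ) • (Point.some _ _ h) = 0) :
    (x = 4 ∧ (y = 6 + 5*t ∨ y = 6 + 8*t)) ∨ (x = 6 ∧ (y = 6 + 4*t ∨ y = 6 + 9*t)) ∨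
    (x = 9 ∧ (y = 6 + 4*t ∨ y = 6 + 9*t)) ∨ (x = 10 ∧ (y = 6 + 4*t ∨ y = 6 + 9*t)) := by
  have heq : y^2 + y = x^3 + x^2 - 4*x + 2 := by
    have h' := (Wc.toAffine.equation_iff x y).mp ((Wc.toAffine.nonsingular_iff x y).mp h).1
    simp only [Wc] at h'
    linear_combination h'
  rw [smul3] at hP
  have hy : y ≠ Wc.toAffine.negY x y := by
    intro hy
    rw [WeierstrassCurve.Affine.Point.add_of_Y_eq rfl hy, zero_add] at hP
    exact WeierstrassCurve.Affine.Point.some_ne_zero h hP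
  rw [WeierstrassCurve.Affine.Point.add_self_of_Y_ne hy] at hP
  have hneg := eq_neg_of_add_eq_zero_left hP
  rw [WeierstrassCurve.Affine.Point.neg_some] at hneg
  have hL2 : Wc.toAffine.slope x x y y * (2*y + 1) = 3*x^2 + 2*x - 4 := by
    rw [WeierstrassCurve.Affine.slope_of_Y_ne rfl hy, div_mul_eq_mul_div,
      div_eq_iff (sub_ne_zero.mpr hy)]
    rw [WeierstrassCurve.Affine.negY]; simp only [Wc]
    ring
  have hx' : Wc.toAffine.addX x x (Wc.toAffine.slope x x y y) = x := by
    injection hneg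
  generalize hgen : Wc.toAffine.slope x x y y = L at hx' hL2
  rw [WeierstrassCurve.Affine.addX] at hx'
  simp only [Wc] at hx'
  have hXeq : L^2 = 3*x + 1 := by linear_combination hx'
  have hq : (x - 4) * ((x - 6) * ((x - 9) * (x - 10))) = 0 := by
    linear_combination (-9 - 36*y - 36*y^2 : Fq) * hXeq +
      (-36 + 9*L + 18*y*L + 18*x + 27*x^2 : Fq) * hL2 + (-36 - 108*x : Fq) * heq +
      (171 - 123*x + 40*x^2 - 5*x^3 - 2*x^4 : Fq) * h13
  rcases mul_eq_zero.mp hq with h4 | hq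
  · left
    have hx : x = 4 := by linear_combination h4
    refine ⟨hx, ?_⟩
    have hyy : (y - (6 + 5*t)) * (y - (6 + 8*t)) = 0 := by
      linear_combination heq + (16 + 5*x + x^2 : Fq) * hx + (40 : Fq) * ht +
        (14 + 6*t - y - y*t : Fq) * h13
    rcases mul_eq_zero.mp hyy with h' | h'
    · exact Or.inl (by linear_combination h')
    · exact Or.inr (by linear_combination h')
  rcases mul_eq_zero.mp hq with h6 | hq
  · right; left
    have hx : x = 6 := by linear_combination h6
    refine ⟨hx, ?_⟩
    have hyy : (y - (6 + 4*t)) * (y - (6 + 9*t)) = 0 := by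
      linear_combination heq + (38 + 7*x + x^2 : Fq) * hx + (36 : Fq) * ht +
        (26 + 6*t - y - y*t : Fq) * h13
    rcases mul_eq_zero.mp hyy with h' | h'
    · exact Or.inl (by linear_combination h')
    · exact Or.inr (by linear_combination h')
  rcases mul_eq_zero.mp hq with h9 | h10
  · right; right; left
    have hx : x = 9 := by linear_combination h9
    refine ⟨hx, ?_⟩
    have hyy : (y - (6 + 4*t)) * (y - (6 + 9*t)) = 0 := by
      linear_combination heq + (86 + 10*x + x^2 : Fq) * hx + (36 : Fq) * ht +
        (68 + 6*t - y - y*t : Fq) * h13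
    rcases mul_eq_zero.mp hyy with h' | h'
    · exact Or.inl (by linear_combination h')
    · exact Or.inr (by linear_combination h')
  · right; right; right
    have hx : x = 10 := by linear_combination h10
    refine ⟨hx, ?_⟩
    have hyy : (y - (6 + 4*t)) * (y - (6 + 9*t)) = 0 := by
      linear_combination heq + (106 + 11*x + x^2 : Fq) * hx + (36 : Fq) * ht +
        (90 + 6*t - y - y*t : Fq) * h13
    rcases mul_eq_zero.mp hyy with h' | h'
    · exact Or.inl (by linear_combination h')
    · exact Or.inr (by linear_combination h')

end pts

/-! The 3-torsion subgroup and the isomorphism. -/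

noncomputable abbrev K3 : AddSubgroup Wc.toAffine.Point :=
  (DistribMulAction.toAddMonoidHom Wc.toAffine.Point (3 : ℤ)).ker

lemma mem_K3 {P : Wc.toAffine.Point} : P ∈ K3 ↔ (3 : ℤ) • P = 0 := Iff.rfl

noncomputable def gen (Q : Wc.toAffine.Point) (hQ : (3 : ℤ) • Q = 0) : ZMod 3 →+ K3 :=
  ZMod.lift 3 ⟨zmultiplesHom K3 ⟨Q, mem_K3.mpr hQ⟩,
    Subtype.ext (by push_cast [zmultiplesHom_apply]; exact hQ)⟩

lemma gen_one (Q : Wc.toAffine.Point) (hQ : (3 : ℤ) • Q = 0) :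
    ((gen Q hQ 1 : K3) : Wc.toAffine.Point) = Q := by
  rw [show (1 : ZMod 3) = ((1 : ℤ) : ZMod 3) by norm_cast, gen, ZMod.lift_coe]
  push_cast [zmultiplesHom_apply]
  exact one_zsmul Q

lemma gen_two (Q : Wc.toAffine.Point) (hQ : (3 : ℤ) • Q = 0) :
    ((gen Q hQ 2 : K3) : Wc.toAffine.Point) = Q + Q := by
  rw [show (2 : ZMod 3) = ((2 : ℤ) : ZMod 3) by norm_cast, gen, ZMod.lift_coe]
  push_cast [zmultiplesHom_apply]
  exact two_zsmul Q

noncomputable def phi (t : Fq) (ht : t ^ 2 = 2) : ZMod 3 × ZMod 3 →+ K3 :=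
  (gen _ (tor1 t ht)).coprod (gen _ (tor2 t ht))

lemma phi_val (t : Fq) (ht : t ^ 2 = 2) (a b : ZMod 3) :
    ((phi t ht (a, b) : K3) : Wc.toAffine.Point) =
      ((gen _ (tor1 t ht) a : K3) : Wc.toAffine.Point) + ((gen _ (tor2 t ht) b : K3)) := by
  rw [phi, AddMonoidHom.coprod_apply, AddSubgroup.coe_add]

lemma negadd1 (t : Fq) (ht : t ^ 2 = 2) :
    Point.some _ _ (nsnP1 t ht) + Point.some _ _ (nsP2 t ht) = -(Point.some _ _ (nsD t ht)) := by
  rw [← negsome1 t ht, ← addD t ht, ← negsome2 t ht]; abel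

lemma negadd2 (t : Fq) (ht : t ^ 2 = 2) :
    Point.some _ _ (nsnP1 t ht) + Point.some _ _ (nsnP2 t ht) = -(Point.some _ _ (nsS t ht)) := by
  rw [← negsome1 t ht, ← negsome2 t ht, ← addS t ht]; abel

lemma zmod3_cases : ∀ c : ZMod 3, c = 0 ∨ c = 1 ∨ c = 2 := by decide

lemma phi_inj (t : Fq) (ht : t ^ 2 = 2) : Function.Injective (phi t ht) := by
  rw [injective_iff_map_eq_zero]
  rintro ⟨a, b⟩ hab
  have hab' : ((phi t ht (a, b) : K3) : Wc.toAffine.Point) = 0 := by rw [hab]; rfl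
  rw [phi_val] at hab'
  rcases zmod3_cases a with ha | ha | ha <;> rcases zmod3_cases b with hb | hb | hb <;>
    subst ha <;> subst hb
  · rfl
  · exfalso; simp only [_root_.map_zero, ZeroMemClass.coe_zero, zero_add, add_zero, gen_one, gen_two] at hab'
    exact some_ne_zero _ hab'
  · exfalso; simp only [_root_.map_zero, ZeroMemClass.coe_zero, zero_add, add_zero, gen_one, gen_two] at hab'
    rw [dblP2 t ht, negsome2 t ht] at hab'
    exact some_ne_zero _ hab'
  · exfalso; simp only [_root_.map_zero, ZeroMemClass.coe_zero, zero_add, add_zero, gen_one, gen_two] at hab'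
    exact some_ne_zero _ hab'
  · exfalso; simp only [_root_.map_zero, ZeroMemClass.coe_zero, zero_add, add_zero, gen_one, gen_two] at hab'
    rw [addS t ht] at hab'
    exact some_ne_zero _ hab'
  · exfalso; simp only [_root_.map_zero, ZeroMemClass.coe_zero, zero_add, add_zero, gen_one, gen_two] at hab'
    rw [dblP2 t ht, negsome2 t ht, addD t ht] at hab'
    exact some_ne_zero _ hab'
  · exfalso; simp only [_root_.map_zero, ZeroMemClass.coe_zero, zero_add, add_zero, gen_one, gen_two] at hab'
    rw [dblP1 t ht, negsome1 t ht] at hab'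
    exact some_ne_zero _ hab'
  · exfalso; simp only [_root_.map_zero, ZeroMemClass.coe_zero, zero_add, add_zero, gen_one, gen_two] at hab'
    rw [dblP1 t ht, negsome1 t ht, negadd1 t ht, negsomeD t ht] at hab'
    exact some_ne_zero _ hab'
  · exfalso; simp only [_root_.map_zero, ZeroMemClass.coe_zero, zero_add, add_zero, gen_one, gen_two] at hab'
    rw [dblP1 t ht, negsome1 t ht, dblP2 t ht, negsome2 t ht, negadd2 t ht,
      negsomeS t ht] at hab'
    exact some_ne_zero _ hab'

lemma phi_surj (t : Fq) (ht : t ^ 2 = 2) : Function.Surjective (phi t ht) := by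
  rintro ⟨P, hP⟩
  have hP' : (3 : ℤ) • P = 0 := hP
  cases P with
  | zero =>
    exact ⟨0, Subtype.ext (by rw [_root_.map_zero]; rfl)⟩
  | some x y h =>
    rcases enum t ht x y h hP' with ⟨hx, hy | hy⟩ | ⟨hx, hy | hy⟩ | ⟨hx, hy | hy⟩ |
      ⟨hx, hy | hy⟩ <;> subst hx <;> subst hy
    · refine ⟨(1, 0), Subtype.ext ?_⟩
      rw [phi_val, gen_one, _root_.map_zero, ZeroMemClass.coe_zero, add_zero]
    · refine ⟨(2, 0), Subtype.ext ?_⟩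
      rw [phi_val, gen_two, _root_.map_zero, ZeroMemClass.coe_zero, add_zero, dblP1 t ht,
        negsome1 t ht]
    · refine ⟨(0, 1), Subtype.ext ?_⟩
      rw [phi_val, gen_one, _root_.map_zero, ZeroMemClass.coe_zero, zero_add]
    · refine ⟨(0, 2), Subtype.ext ?_⟩
      rw [phi_val, gen_two, _root_.map_zero, ZeroMemClass.coe_zero, zero_add, dblP2 t ht,
        negsome2 t ht]
    · refine ⟨(1, 1), Subtype.ext ?_⟩
      rw [phi_val, gen_one, gen_one, addS t ht]
    · refine ⟨(2, 2), Subtype.ext ?_⟩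
      rw [phi_val, gen_two, gen_two, dblP1 t ht, negsome1 t ht, dblP2 t ht, negsome2 t ht,
        negadd2 t ht, negsomeS t ht]
    · refine ⟨(2, 1), Subtype.ext ?_⟩
      rw [phi_val, gen_two, gen_one, dblP1 t ht, negsome1 t ht, negadd1 t ht, negsomeD t ht]
    · refine ⟨(1, 2), Subtype.ext ?_⟩
      rw [phi_val, gen_one, gen_two, dblP2 t ht, negsome2 t ht, addD t ht]

noncomputable def isoK (t : Fq) (ht : t ^ 2 = 2) : (ZMod 3 × ZMod 3) ≃+ K3 :=
  AddEquiv.ofBijective (phi t ht) ⟨phi_inj t ht, phi_surj t ht⟩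

/-- The elliptic curve `y² + y = x³ + x² - 4x + 2` over the field `𝔽₁₆₉` with `13² = 169`
elements has nonzero discriminant, and the `3`-torsion subgroup
`{P ∈ E(𝔽₁₆₉) : 3 • P = 0}` of its group of `𝔽₁₆₉`-rational points is isomorphic, as an
abelian group, to `(ZMod 3) × (ZMod 3)`. -/
theorem ogg_stmt3 [Fact (Nat.Prime 13)] :
    letI W : WeierstrassCurve (GaloisField 13 2) :=
      { a₁ := 0, a₂ := 1, a₃ := 1, a₄ := -4, a₆ := 2 }
    W.Δ ≠ 0 ∧ Nonempty
      ((DistribMulAction.toAddMonoidHom W.toAffine.Point (3 : ℤ)).ker ≃+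
        (ZMod 3) × (ZMod 3)) := by
  obtain ⟨t, ht⟩ := exists_sqrt2
  exact ⟨hDne, ⟨(isoK t ht).symm⟩⟩
end

section
/- Let S₂, S₃, S₅, S₁₁ ∈ M₅(ℤ) be the four explicit integer matrices given in the context, and let R ⊆ M₅(ℤ) be the subring (with identity) generated by them. Then: (a) R equals the ℤ-linear span of the five matrices {1, S₂, S₃, S₅, S₁₁}, which are ℤ-linearly independent, so R is a free ℤ-module of rank 5; and (b) the additive map R → ℤ⁵ sending a matrix M to its first row e₁·M is bijective. Consequently, the module of integer row vectors ℤ^{1×5}, with R acting by right multiplication, is a free R-module of rank one generated by e₁ = (1,0,0,0,0). -/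
open Matrix

/-- The matrix by which the Hecke operator `T₂` acts on the character group `M₅` of `J₀(65)`. -/
def OggS2 : Matrix (Fin 5) (Fin 5) ℤ :=
  !![-1, -1, 1, 0, 0;
     -1, -1, 0, 1, 0;
      2, -1, 0, 0, -1;
     -1,  2, 0, 0, -1;
      0,  0, 0, 0, -1]

/-- The matrix by which the Hecke operator `T₃` acts on the character group `M₅` of `J₀(65)`. -/
def OggS3 : Matrix (Fin 5) (Fin 5) ℤ :=
  !![ 0, -1, 0, 1, -1;
     -1,  0, 1, 0, -1;
     -1,  2, 1, 0, -2;
      2, -1, 0, 1, -2;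
      0,  0, 0, 0, -2]

/-- The matrix by which the Hecke operator `T₅` acts on the character group `M₅` of `J₀(65)`. -/
def OggS5 : Matrix (Fin 5) (Fin 5) ℤ :=
  !![0, 1, 0, 0, -1;
     1, 0, 0, 0, -1;
     0, 0, 0, 1, -1;
     0, 0, 1, 0, -1;
     0, 0, 0, 0, -1]

/-- The matrix by which the Hecke operator `T₁₁` acts on the character group `M₅` of `J₀(65)`. -/
def OggS11 : Matrix (Fin 5) (Fin 5) ℤ :=
  !![ 0,  3,  0, -1, 0;
      3,  0, -1,  0, 0;
      1, -2, -1,  2, 1;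
     -2,  1,  2, -1, 1;
      0,  0,  0,  0, 2]

/-- The subring of `M₅(ℤ)` generated by `S₂, S₃, S₅, S₁₁` (a concrete model of the Hecke
algebra `𝐓` of level `65`). -/
noncomputable def OggHeckeAlgebra : Subring (Matrix (Fin 5) (Fin 5) ℤ) :=
  Subring.closure {OggS2, OggS3, OggS5, OggS11}

abbrev OggMat := Matrix (Fin 5) (Fin 5) ℤ

/-- The `ℤ`-span of `1, S₂, S₃, S₅, S₁₁`. -/
noncomputable def oggSp : Submodule ℤ OggMat :=
  Submodule.span ℤ {1, OggS2, OggS3, OggS5, OggS11}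

lemma oggComb_mem (a b c d e : ℤ) :
    a • (1:OggMat) + b • OggS2 + c • OggS3 + d • OggS5 + e • OggS11 ∈ oggSp := by
  apply add_mem; apply add_mem; apply add_mem; apply add_mem
  all_goals
    refine Submodule.smul_mem _ _ (Submodule.subset_span ?_)
    simp [Set.mem_insert_iff]

/-- Right inverse to the first-row map on the span. -/
def oggPsi (v : Fin 5 → ℤ) : OggMat :=
  (v 0 + v 2) • (1:OggMat) + (v 2) • OggS2 + (v 1 + v 2 + 3 * v 3 + v 4) • OggS3 +
    (-v 1 - v 2 - 3 * v 3 - 2 * v 4) • OggS5 + (v 1 + v 2 + 2 * v 3 + v 4) • OggS11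

lemma oggPsi_mem (v : Fin 5 → ℤ) : oggPsi v ∈ oggSp := oggComb_mem _ _ _ _ _

lemma oggPsi_add (v w : Fin 5 → ℤ) : oggPsi (v + w) = oggPsi v + oggPsi w := by
  simp only [oggPsi, Pi.add_apply]
  module

lemma oggPsi_smul (c : ℤ) (v : Fin 5 → ℤ) : oggPsi (c • v) = c • oggPsi v := by
  simp only [oggPsi, Pi.smul_apply, smul_eq_mul]
  module

lemma oggPsi_row (v : Fin 5 → ℤ) : oggPsi v 0 = v := by
  funext j
  fin_cases j <;>
  · simp only [oggPsi, Matrix.add_apply, Matrix.smul_apply, smul_eq_mul, OggS2, OggS3,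
      OggS5, OggS11, Matrix.one_apply, Matrix.cons_val', Matrix.cons_val_zero,
      Matrix.cons_val_one, Matrix.head_cons, Matrix.empty_val', Matrix.cons_val_fin_one,
      Matrix.head_fin_const, Matrix.of_apply]
    norm_num [Fin.ext_iff]
    try ring_nf
    try rfl

lemma oggPsi_row_eq {M : OggMat} (hM : M ∈ oggSp) : oggPsi (M 0) = M := by
  induction hM using Submodule.span_induction with
  | mem x hx =>
    simp only [Set.mem_insert_iff, Set.mem_singleton_iff] at hx
    rcases hx with rfl | rfl | rfl | rfl | rfl <;> decide
  | zero => decide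
  | add x y hx hy ihx ihy =>
    have h : (x + y) 0 = x 0 + y 0 := rfl
    rw [h, oggPsi_add, ihx, ihy]
  | smul c x hx ih =>
    have h : (c • x) 0 = c • x 0 := rfl
    rw [h, oggPsi_smul, ih]

lemma oggGen_mul_gen_mem :
    ∀ x ∈ ({1, OggS2, OggS3, OggS5, OggS11} : Set OggMat),
      ∀ y ∈ ({1, OggS2, OggS3, OggS5, OggS11} : Set OggMat), x * y ∈ oggSp := by
  intro x hx y hy
  simp only [Set.mem_insert_iff, Set.mem_singleton_iff] at hx hy
  rcases hx with rfl | rfl | rfl | rfl | rfl <;> rcases hy with rfl | rfl | rfl | rfl | rfl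
  · rw [show (1:OggMat) * 1 = (1:ℤ) • 1 + (0:ℤ) • OggS2 + (0:ℤ) • OggS3 + (0:ℤ) • OggS5 + (0:ℤ) • OggS11 from by decide]
    exact oggComb_mem _ _ _ _ _
  · rw [show (1:OggMat) * OggS2 = (0:ℤ) • 1 + (1:ℤ) • OggS2 + (0:ℤ) • OggS3 + (0:ℤ) • OggS5 + (0:ℤ) • OggS11 from by decide]
    exact oggComb_mem _ _ _ _ _
  · rw [show (1:OggMat) * OggS3 = (0:ℤ) • 1 + (0:ℤ) • OggS2 + (1:ℤ) • OggS3 + (0:ℤ) • OggS5 + (0:ℤ) • OggS11 from by decide]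
    exact oggComb_mem _ _ _ _ _
  · rw [show (1:OggMat) * OggS5 = (0:ℤ) • 1 + (0:ℤ) • OggS2 + (0:ℤ) • OggS3 + (1:ℤ) • OggS5 + (0:ℤ) • OggS11 from by decide]
    exact oggComb_mem _ _ _ _ _
  · rw [show (1:OggMat) * OggS11 = (0:ℤ) • 1 + (0:ℤ) • OggS2 + (0:ℤ) • OggS3 + (0:ℤ) • OggS5 + (1:ℤ) • OggS11 from by decide]
    exact oggComb_mem _ _ _ _ _
  · rw [show (OggS2:OggMat) * 1 = (0:ℤ) • 1 + (1:ℤ) • OggS2 + (0:ℤ) • OggS3 + (0:ℤ) • OggS5 + (0:ℤ) • OggS11 from by decide]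
    exact oggComb_mem _ _ _ _ _
  · rw [show (OggS2:OggMat) * OggS2 = (3:ℤ) • 1 + (-1:ℤ) • OggS2 + (-4:ℤ) • OggS3 + (5:ℤ) • OggS5 + (-3:ℤ) • OggS11 from by decide]
    exact oggComb_mem _ _ _ _ _
  · rw [show (OggS2:OggMat) * OggS3 = (0:ℤ) • 1 + (0:ℤ) • OggS2 + (0:ℤ) • OggS3 + (0:ℤ) • OggS5 + (1:ℤ) • OggS11 from by decide]
    exact oggComb_mem _ _ _ _ _
  · rw [show (OggS2:OggMat) * OggS5 = (-1:ℤ) • 1 + (0:ℤ) • OggS2 + (3:ℤ) • OggS3 + (-4:ℤ) • OggS5 + (2:ℤ) • OggS11 from by decide]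
    exact oggComb_mem _ _ _ _ _
  · rw [show (OggS2:OggMat) * OggS11 = (-2:ℤ) • 1 + (0:ℤ) • OggS2 + (5:ℤ) • OggS3 + (-6:ℤ) • OggS5 + (2:ℤ) • OggS11 from by decide]
    exact oggComb_mem _ _ _ _ _
  · rw [show (OggS3:OggMat) * 1 = (0:ℤ) • 1 + (0:ℤ) • OggS2 + (1:ℤ) • OggS3 + (0:ℤ) • OggS5 + (0:ℤ) • OggS11 from by decide]
    exact oggComb_mem _ _ _ _ _
  · rw [show (OggS3:OggMat) * OggS2 = (0:ℤ) • 1 + (0:ℤ) • OggS2 + (0:ℤ) • OggS3 + (0:ℤ) • OggS5 + (1:ℤ) • OggS11 from by decide]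
    exact oggComb_mem _ _ _ _ _
  · rw [show (OggS3:OggMat) * OggS3 = (2:ℤ) • 1 + (-1:ℤ) • OggS2 + (2:ℤ) • OggS3 + (-3:ℤ) • OggS5 + (1:ℤ) • OggS11 from by decide]
    exact oggComb_mem _ _ _ _ _
  · rw [show (OggS3:OggMat) * OggS5 = (0:ℤ) • 1 + (1:ℤ) • OggS2 + (2:ℤ) • OggS3 + (-3:ℤ) • OggS5 + (2:ℤ) • OggS11 from by decide]
    exact oggComb_mem _ _ _ _ _
  · rw [show (OggS3:OggMat) * OggS11 = (-2:ℤ) • 1 + (3:ℤ) • OggS2 + (0:ℤ) • OggS3 + (1:ℤ) • OggS5 + (1:ℤ) • OggS11 from by decide]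
    exact oggComb_mem _ _ _ _ _
  · rw [show (OggS5:OggMat) * 1 = (0:ℤ) • 1 + (0:ℤ) • OggS2 + (0:ℤ) • OggS3 + (1:ℤ) • OggS5 + (0:ℤ) • OggS11 from by decide]
    exact oggComb_mem _ _ _ _ _
  · rw [show (OggS5:OggMat) * OggS2 = (-1:ℤ) • 1 + (0:ℤ) • OggS2 + (3:ℤ) • OggS3 + (-4:ℤ) • OggS5 + (2:ℤ) • OggS11 from by decide]
    exact oggComb_mem _ _ _ _ _
  · rw [show (OggS5:OggMat) * OggS3 = (0:ℤ) • 1 + (1:ℤ) • OggS2 + (2:ℤ) • OggS3 + (-3:ℤ) • OggS5 + (2:ℤ) • OggS11 from by decide]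
    exact oggComb_mem _ _ _ _ _
  · rw [show (OggS5:OggMat) * OggS5 = (1:ℤ) • 1 + (0:ℤ) • OggS2 + (0:ℤ) • OggS3 + (0:ℤ) • OggS5 + (0:ℤ) • OggS11 from by decide]
    exact oggComb_mem _ _ _ _ _
  · rw [show (OggS5:OggMat) * OggS11 = (2:ℤ) • 1 + (-1:ℤ) • OggS2 + (-3:ℤ) • OggS3 + (5:ℤ) • OggS5 + (-3:ℤ) • OggS11 from by decide]
    exact oggComb_mem _ _ _ _ _
  · rw [show (OggS11:OggMat) * 1 = (0:ℤ) • 1 + (0:ℤ) • OggS2 + (0:ℤ) • OggS3 + (0:ℤ) • OggS5 + (1:ℤ) • OggS11 from by decide]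
    exact oggComb_mem _ _ _ _ _
  · rw [show (OggS11:OggMat) * OggS2 = (-2:ℤ) • 1 + (0:ℤ) • OggS2 + (5:ℤ) • OggS3 + (-6:ℤ) • OggS5 + (2:ℤ) • OggS11 from by decide]
    exact oggComb_mem _ _ _ _ _
  · rw [show (OggS11:OggMat) * OggS3 = (-2:ℤ) • 1 + (3:ℤ) • OggS2 + (0:ℤ) • OggS3 + (1:ℤ) • OggS5 + (1:ℤ) • OggS11 from by decide]
    exact oggComb_mem _ _ _ _ _
  · rw [show (OggS11:OggMat) * OggS5 = (2:ℤ) • 1 + (-1:ℤ) • OggS2 + (-3:ℤ) • OggS3 + (5:ℤ) • OggS5 + (-3:ℤ) • OggS11 from by decide]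
    exact oggComb_mem _ _ _ _ _
  · rw [show (OggS11:OggMat) * OggS11 = (6:ℤ) • 1 + (-5:ℤ) • OggS2 + (-4:ℤ) • OggS3 + (5:ℤ) • OggS5 + (-5:ℤ) • OggS11 from by decide]
    exact oggComb_mem _ _ _ _ _

lemma oggGen_mul_mem {x : OggMat} (hx : x ∈ ({1, OggS2, OggS3, OggS5, OggS11} : Set OggMat))
    {y : OggMat} (hy : y ∈ oggSp) : x * y ∈ oggSp := by
  induction hy using Submodule.span_induction with
  | mem z hz => exact oggGen_mul_gen_mem x hx z hz
  | zero => rw [mul_zero]; exact zero_mem _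
  | add a b _ _ ha hb => rw [mul_add]; exact add_mem ha hb
  | smul c a _ ha => rw [mul_smul_comm]; exact Submodule.smul_mem _ _ ha

lemma oggMul_mem {x y : OggMat} (hx : x ∈ oggSp) (hy : y ∈ oggSp) : x * y ∈ oggSp := by
  induction hx using Submodule.span_induction with
  | mem z hz => exact oggGen_mul_mem hz hy
  | zero => rw [zero_mul]; exact zero_mem _
  | add a b _ _ ha hb => rw [add_mul]; exact add_mem ha hb
  | smul c a _ ha => rw [smul_mul_assoc]; exact Submodule.smul_mem _ _ ha

lemma oggClosure_eq : (OggHeckeAlgebra : Set OggMat) = ↑oggSp := by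
  ext x
  constructor
  · intro hx
    replace hx : x ∈ Subring.closure {OggS2, OggS3, OggS5, OggS11} := hx
    induction hx using Subring.closure_induction with
    | mem z hz =>
      refine Submodule.subset_span ?_
      simp only [Set.mem_insert_iff, Set.mem_singleton_iff] at hz ⊢
      tauto
    | zero => exact zero_mem _
    | one => exact Submodule.subset_span (by simp [Set.mem_insert_iff])
    | add a b _ _ ha hb => exact add_mem ha hb
    | neg a _ ha => exact neg_mem ha
    | mul a b _ _ ha hb => exact oggMul_mem ha hb
  · intro hx
    replace hx : x ∈ oggSp := hx
    induction hx using Submodule.span_induction with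
    | mem z hz =>
      simp only [Set.mem_insert_iff, Set.mem_singleton_iff] at hz
      rcases hz with rfl | rfl | rfl | rfl | rfl
      · exact one_mem _
      all_goals exact Subring.subset_closure (by simp [Set.mem_insert_iff])
    | zero => exact zero_mem OggHeckeAlgebra
    | add a b _ _ ha hb => exact add_mem ha hb
    | smul c a _ ha => exact zsmul_mem ha c

/-- (a) The subring `R` of `M₅(ℤ)` generated by the four Hecke matrices
`S₂, S₃, S₅, S₁₁` coincides with the `ℤ`-linear span of `1, S₂, S₃, S₅, S₁₁`, and these five
matrices are `ℤ`-linearly independent; so `R` is a free `ℤ`-module of rank `5`.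
(b) The additive map `R → ℤ⁵` sending a matrix `M ∈ R` to its first row `e₁ ⬝ M` is bijective.
(Hence the row module `ℤ^{1×5}` is a free `R`-module of rank one generated by
`e₁ = (1,0,0,0,0)`: this is the concrete content of the isomorphism `M₅ ≅ 𝐓` of
Proposition 3.2.) -/
theorem ogg_stmt4 :
    ((OggHeckeAlgebra : Set (Matrix (Fin 5) (Fin 5) ℤ)) =
        (Submodule.span ℤ {1, OggS2, OggS3, OggS5, OggS11} :
          Submodule ℤ (Matrix (Fin 5) (Fin 5) ℤ)) ∧
      LinearIndependent ℤ ![(1 : Matrix (Fin 5) (Fin 5) ℤ), OggS2, OggS3, OggS5, OggS11]) ∧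
    Function.Bijective
      (fun M : OggHeckeAlgebra => ((M : Matrix (Fin 5) (Fin 5) ℤ) 0 : Fin 5 → ℤ)) := by
  constructor
  · constructor
    · exact oggClosure_eq
    · rw [Fintype.linearIndependent_iff]
      intro g h i
      rw [Fin.sum_univ_five] at h
      simp only [Matrix.cons_val_zero, Matrix.cons_val_one, Matrix.head_cons, Matrix.cons_val] at h
      have e0 := congrFun (congrFun h 0) 0
      have e1 := congrFun (congrFun h 0) 1
      have e2 := congrFun (congrFun h 0) 2
      have e3 := congrFun (congrFun h 0) 3
      have e4 := congrFun (congrFun h 0) 4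
      simp only [Matrix.add_apply, Matrix.smul_apply, Matrix.zero_apply, smul_eq_mul,
        Matrix.one_apply, OggS2, OggS3, OggS5, OggS11, Matrix.cons_val', Matrix.cons_val_zero,
        Matrix.cons_val_one, Matrix.head_cons, Matrix.empty_val', Matrix.cons_val_fin_one,
        Matrix.head_fin_const, Matrix.of_apply, Matrix.cons_val] at e0 e1 e2 e3 e4
      norm_num [Fin.ext_iff] at e0 e1 e2 e3 e4
      fin_cases i <;> simp only [Fin.isValue, Fin.zero_eta, Fin.mk_one, Fin.reduceFinMk] <;> omega
  · constructor
    · intro M N h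
      have hM : (M : OggMat) ∈ oggSp := by
        have := M.2
        rwa [← SetLike.mem_coe, oggClosure_eq, SetLike.mem_coe] at this
      have hN : (N : OggMat) ∈ oggSp := by
        have := N.2
        rwa [← SetLike.mem_coe, oggClosure_eq, SetLike.mem_coe] at this
      apply Subtype.ext
      calc (M : OggMat) = oggPsi ((M : OggMat) 0) := (oggPsi_row_eq hM).symm
        _ = oggPsi ((N : OggMat) 0) := by rw [show ((M : OggMat) 0) = ((N : OggMat) 0) from h]
        _ = N := oggPsi_row_eq hN
    · intro v
      refine ⟨⟨oggPsi v, ?_⟩, ?_⟩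
      · rw [← SetLike.mem_coe, oggClosure_eq, SetLike.mem_coe]
        exact oggPsi_mem v
      · exact oggPsi_row v
end
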